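/- arXiv:1308.4092 — 2 statements merged into one kernel-verified Lean document; each statement's English description precedes it below -/
import Mathlib

section
/- Let K(t) = ∫_{0}^{1} dx/√((1−x²)(1−t·x²)) for t ∈ (0,1), and define the elliptic nome of modulus parameter t by q(t) = exp(−π·K(1−t)/K(t)). Then lim_{t→0⁺} q(t)/t = 1/16. -/
open Real MeasureTheory Filter Set intervalIntegral


lemma integrableOn_rpow_Ioo (r : ℝ) (h : -1 < r) :
    IntegrableOn (fun x : ℝ => x ^ r) (Ioo 0 1) := by
  have := intervalIntegral.intervalIntegrable_rpow' (a := 0) (b := 1) h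
  rw [intervalIntegrable_iff] at this
  exact this.mono_set (by rw [Set.uIoc_of_le zero_le_one]; exact Set.Ioo_subset_Ioc_self)

lemma integrableOn_inv_sqrt : IntegrableOn (fun x : ℝ => 1 / Real.sqrt x) (Ioo 0 1) := by
  refine (integrableOn_rpow_Ioo (-(1/2)) (by norm_num)).congr_fun (fun x hx => ?_) measurableSet_Ioo
  dsimp only; rw [Real.sqrt_eq_rpow, Real.rpow_neg hx.1.le]; norm_num

lemma integrableOn_inv_sqrt_one_sub : IntegrableOn (fun x : ℝ => 1 / Real.sqrt (1 - x)) (Ioo 0 1) := by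
  have h := (intervalIntegral.intervalIntegrable_rpow' (a := 0) (b := 1) (r := -(1/2))
    (by norm_num)).comp_sub_left 1
  simp only [sub_zero, sub_self] at h
  rw [intervalIntegrable_iff] at h
  have h2 : IntegrableOn (fun x : ℝ => (1 - x) ^ (-(1/2) : ℝ)) (Ioo 0 1) :=
    h.mono_set (by rw [Set.uIoc_comm, Set.uIoc_of_le zero_le_one]; exact Set.Ioo_subset_Ioc_self)
  refine h2.congr_fun (fun x hx => ?_) measurableSet_Ioo
  dsimp only; rw [Real.sqrt_eq_rpow, Real.rpow_neg (by linarith [hx.2] : (0:ℝ) ≤ 1 - x)]; norm_num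


-- integrability of 1/sqrt(1-x^2)
lemma integrableOn_g1 : IntegrableOn (fun x : ℝ => 1 / Real.sqrt (1 - x^2)) (Ioo 0 1) := by
  refine Integrable.mono' integrableOn_inv_sqrt_one_sub ?_ ?_
  · refine (ContinuousOn.div continuousOn_const ?_ ?_).aestronglyMeasurable measurableSet_Ioo
    · exact (Real.continuous_sqrt.comp (by continuity)).continuousOn
    · intro x hx
      have h1 : 0 < 1 - x^2 := by nlinarith [hx.1, hx.2]
      positivity
  · refine (ae_restrict_iff' measurableSet_Ioo).2 (ae_of_all _ fun x hx => ?_)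
    have h1 : 0 < 1 - x^2 := by nlinarith [hx.1, hx.2]
    have h2 : 0 < 1 - x := by linarith [hx.2]
    rw [Real.norm_eq_abs, abs_of_nonneg (by positivity)]
    apply div_le_div_of_nonneg_left one_pos.le (by positivity)
    apply Real.sqrt_le_sqrt
    nlinarith [hx.1]


lemma integrableOn_Kint (t : ℝ) (ht : t < 1) :
    IntegrableOn (fun x : ℝ => 1 / Real.sqrt ((1 - x^2) * (1 - t * x^2))) (Ioo 0 1) := by
  set m : ℝ := min 1 (1 - t) with hm
  have hm0 : 0 < m := lt_min one_pos (by linarith)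
  have key : ∀ x ∈ Ioo (0:ℝ) 1, 0 < (1 - x^2) * (1 - t * x^2) ∧
      1 / Real.sqrt ((1 - x^2) * (1 - t * x^2)) ≤ (1 / Real.sqrt m) * (1 / Real.sqrt (1 - x)) := by
    intro x hx
    have hx0 := hx.1; have hx1 := hx.2
    have h1 : 0 < 1 - x := by linarith
    have h2 : (1 - x) * m ≤ (1 - x^2) * (1 - t * x^2) := by
      have ha : 1 - x ≤ 1 - x^2 := by nlinarith
      have hb : m ≤ 1 - t * x^2 := by
        rcases le_or_gt t 0 with h | h
        · calc m ≤ 1 := min_le_left _ _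
            _ ≤ 1 - t * x^2 := by nlinarith
        · calc m ≤ 1 - t := min_le_right _ _
            _ ≤ 1 - t * x^2 := by nlinarith
      have := mul_le_mul ha hb hm0.le (by nlinarith)
      linarith
    have h3 : 0 < (1 - x^2) * (1 - t * x^2) := lt_of_lt_of_le (by positivity) h2
    refine ⟨h3, ?_⟩
    rw [div_mul_div_comm, one_mul, ← Real.sqrt_mul hm0.le]
    apply div_le_div_of_nonneg_left one_pos.le (Real.sqrt_pos.2 (by positivity))
    rw [mul_comm m (1-x)]
    exact Real.sqrt_le_sqrt h2
  refine Integrable.mono' (integrableOn_inv_sqrt_one_sub.const_mul (1 / Real.sqrt m)) ?_ ?_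
  · refine (ContinuousOn.div continuousOn_const ?_ ?_).aestronglyMeasurable measurableSet_Ioo
    · exact (Real.continuous_sqrt.comp (by continuity)).continuousOn
    · intro x hx
      exact (Real.sqrt_pos.2 (key x hx).1).ne'
  · refine (ae_restrict_iff' measurableSet_Ioo).2 (ae_of_all _ fun x hx => ?_)
    rw [Real.norm_eq_abs, abs_of_nonneg (by positivity)]
    exact (key x hx).2


lemma integral_g1 : ∫ x in Ioo (0:ℝ) 1, 1 / Real.sqrt (1 - x^2) = π / 2 := by
  rw [← MeasureTheory.integral_Ioc_eq_integral_Ioo, ← intervalIntegral.integral_of_le zero_le_one]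
  have h := intervalIntegral.integral_eq_sub_of_hasDeriv_right_of_le (f := Real.arcsin)
    (f' := fun x => 1 / Real.sqrt (1 - x^2)) zero_le_one
    (Real.continuous_arcsin.continuousOn) ?_ ?_
  · rw [h, Real.arcsin_one, Real.arcsin_zero, sub_zero]
  · intro x hx
    exact (Real.hasDerivAt_arcsin
      (by intro h; rw [h] at hx; exact absurd hx.1 (by norm_num))
      (ne_of_lt hx.2)).hasDerivWithinAt
  · rw [intervalIntegrable_iff, Set.uIoc_of_le zero_le_one]
    exact integrableOn_g1.congr_set_ae (Ioo_ae_eq_Ioc (μ := volume) (a := (0:ℝ)) (b := 1)).symm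

lemma K_bounds (t : ℝ) (ht0 : 0 ≤ t) (ht1 : t < 1) :
    π / 2 ≤ (∫ x in Ioo (0:ℝ) 1, 1 / Real.sqrt ((1 - x^2) * (1 - t * x^2))) ∧
    (∫ x in Ioo (0:ℝ) 1, 1 / Real.sqrt ((1 - x^2) * (1 - t * x^2)))
      ≤ (1 / Real.sqrt (1 - t)) * (π / 2) := by
  have hInt := integrableOn_Kint t ht1
  constructor
  · rw [← integral_g1]
    refine setIntegral_mono_on integrableOn_g1 hInt measurableSet_Ioo fun x hx => ?_
    have h1 : 0 < 1 - x^2 := by nlinarith [hx.1, hx.2]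
    have h2 : 0 < 1 - t * x^2 := by nlinarith [hx.1, hx.2]
    apply div_le_div_of_nonneg_left one_pos.le (Real.sqrt_pos.2 (by positivity))
    apply Real.sqrt_le_sqrt; nlinarith [mul_nonneg (mul_nonneg ht0 (sq_nonneg x)) h1.le]
  · have : (1 / Real.sqrt (1 - t)) * (π / 2)
        = ∫ x in Ioo (0:ℝ) 1, (1 / Real.sqrt (1 - t)) * (1 / Real.sqrt (1 - x^2)) := by
      rw [MeasureTheory.integral_const_mul, integral_g1]
    rw [this]
    refine setIntegral_mono_on hInt (integrableOn_g1.const_mul _) measurableSet_Ioo fun x hx => ?_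
    have h1 : 0 < 1 - x^2 := by nlinarith [hx.1, hx.2]
    have h2 : 0 < 1 - t := by linarith
    rw [div_mul_div_comm, one_mul, ← Real.sqrt_mul h2.le]
    apply div_le_div_of_nonneg_left one_pos.le (Real.sqrt_pos.2 (by positivity))
    apply Real.sqrt_le_sqrt; nlinarith [mul_nonneg (mul_nonneg ht0 h1.le) h1.le]


lemma image_one_sub_sq : (fun x : ℝ => 1 - x^2) '' (Ioo 0 1) = Ioo 0 1 := by
  ext y
  constructor
  · rintro ⟨x, hx, rfl⟩
    refine ⟨show (0:ℝ) < 1 - x^2 by nlinarith [hx.1, hx.2], show (1:ℝ) - x^2 < 1 by nlinarith [hx.1, hx.2]⟩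
  · intro hy
    refine ⟨Real.sqrt (1 - y), ⟨Real.sqrt_pos.2 (by linarith [hy.2]), ?_⟩, ?_⟩
    · calc Real.sqrt (1 - y) < Real.sqrt 1 := Real.sqrt_lt_sqrt (by linarith [hy.2]) (by linarith [hy.1])
        _ = 1 := Real.sqrt_one
    · show 1 - Real.sqrt (1 - y) ^ 2 = y
      rw [Real.sq_sqrt (by linarith [hy.2])]; ring

lemma subst_lemma (t : ℝ) (ht : 0 < t) (ht1 : t < 1) :
    (∫ x in Ioo (0:ℝ) 1, 1 / Real.sqrt ((1 - x^2) * (1 - (1 - t) * x^2)))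
      = ∫ z in Ioo (0:ℝ) 1, 1 / (2 * Real.sqrt z * Real.sqrt (1 - z) * Real.sqrt (t + (1 - t) * z)) := by
  have hderiv : ∀ x ∈ Ioo (0:ℝ) 1, HasDerivWithinAt (fun x : ℝ => 1 - x^2) (-(2*x)) (Ioo 0 1) x := by
    intro x hx
    have : HasDerivAt (fun x : ℝ => 1 - x^2) (-(2*x)) x := by
      simpa using ((hasDerivAt_pow 2 x).const_sub 1)
    exact this.hasDerivWithinAt
  have hinj : InjOn (fun x : ℝ => 1 - x^2) (Ioo 0 1) := by
    intro a ha b hb h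
    simp only at h
    nlinarith [ha.1, hb.1]
  have key := MeasureTheory.integral_image_eq_integral_abs_deriv_smul measurableSet_Ioo hderiv hinj
    (fun z => 1 / (2 * Real.sqrt z * Real.sqrt (1 - z) * Real.sqrt (t + (1 - t) * z)))
  rw [image_one_sub_sq] at key
  rw [key]
  refine setIntegral_congr_fun measurableSet_Ioo fun x hx => ?_
  have hx0 := hx.1; have hx1 := hx.2
  have h1 : 0 < 1 - x^2 := by nlinarith
  have h2 : 0 < 1 - (1-t)*x^2 := by nlinarith
  have hsx : Real.sqrt (x^2) = x := Real.sqrt_sq hx0.le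
  simp only [smul_eq_mul]
  rw [abs_neg, abs_of_nonneg (by positivity : (0:ℝ) ≤ 2*x)]
  rw [show 1 - (1 - x^2) = x^2 by ring, show t + (1 - t) * (1 - x^2) = 1 - (1-t)*x^2 by ring, hsx]
  rw [Real.sqrt_mul h1.le]
  have s1 : 0 < Real.sqrt (1 - x^2) := Real.sqrt_pos.2 h1
  have s2 : 0 < Real.sqrt (1 - (1-t)*x^2) := Real.sqrt_pos.2 h2
  field_simp


lemma integrableOn_B (t : ℝ) (ht : 0 < t) :
    IntegrableOn (fun z : ℝ => 1 / (2 * Real.sqrt z * Real.sqrt (t + z))) (Ioo 0 1) := by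
  refine Integrable.mono' (integrableOn_inv_sqrt.const_mul (1 / (2 * Real.sqrt t))) ?_ ?_
  · refine (ContinuousOn.div continuousOn_const ?_ ?_).aestronglyMeasurable measurableSet_Ioo
    · exact (by continuity : Continuous fun z : ℝ => 2 * Real.sqrt z * Real.sqrt (t + z)).continuousOn
    · intro z hz
      have : 0 < t + z := by linarith [hz.1]
      have := Real.sqrt_pos.2 hz.1
      have := Real.sqrt_pos.2 this
      positivity
  · refine (ae_restrict_iff' measurableSet_Ioo).2 (ae_of_all _ fun z hz => ?_)
    have h1 : (0:ℝ) < Real.sqrt z := Real.sqrt_pos.2 hz.1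
    have h2 : (0:ℝ) < Real.sqrt t := Real.sqrt_pos.2 ht
    have h3 : Real.sqrt t ≤ Real.sqrt (t + z) := Real.sqrt_le_sqrt (by linarith [hz.1])
    rw [Real.norm_eq_abs, abs_of_nonneg (by positivity)]
    rw [div_mul_div_comm, one_mul]
    apply div_le_div_of_nonneg_left one_pos.le (by positivity)
    calc 2 * Real.sqrt t * Real.sqrt z ≤ 2 * Real.sqrt (t+z) * Real.sqrt z := by nlinarith
      _ = 2 * Real.sqrt z * Real.sqrt (t+z) := by ring

lemma E_val (t : ℝ) (ht : 0 < t) :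
    ∫ z in Ioo (0:ℝ) 1, 1 / (2 * Real.sqrt z * Real.sqrt (t + z))
      = Real.log (1 + Real.sqrt (1 + t)) - Real.log (Real.sqrt t) := by
  rw [← MeasureTheory.integral_Ioc_eq_integral_Ioo, ← intervalIntegral.integral_of_le zero_le_one]
  have hF : ∀ z ∈ Ioo (0:ℝ) 1, HasDerivAt (fun z => Real.log (Real.sqrt z + Real.sqrt (t + z)))
      (1 / (2 * Real.sqrt z * Real.sqrt (t + z))) z := by
    intro z hz
    have hz0 := hz.1
    have htz : (0:ℝ) < t + z := by linarith
    have h1 : HasDerivAt Real.sqrt (1 / (2 * Real.sqrt z)) z := Real.hasDerivAt_sqrt hz0.ne'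
    have h2 : HasDerivAt (fun z : ℝ => Real.sqrt (t + z)) (1 / (2 * Real.sqrt (t + z))) z := by
      have inner : HasDerivAt (fun z : ℝ => t + z) 1 z := (hasDerivAt_id z).const_add t
      have h2' := (Real.hasDerivAt_sqrt htz.ne').comp z inner
      rw [mul_one] at h2'
      exact h2'
    have hsum := h1.add h2
    have hpos : (0:ℝ) < Real.sqrt z + Real.sqrt (t + z) :=
      add_pos (Real.sqrt_pos.2 hz0) (Real.sqrt_pos.2 htz)
    have := hsum.log hpos.ne'
    refine this.congr_deriv ?_; symm; simp only [Pi.add_apply]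
    have s1 : (0:ℝ) < Real.sqrt z := Real.sqrt_pos.2 hz0
    have s2 : (0:ℝ) < Real.sqrt (t + z) := Real.sqrt_pos.2 htz
    field_simp
    ring
  have hcont : ContinuousOn (fun z => Real.log (Real.sqrt z + Real.sqrt (t + z))) (Icc 0 1) := by
    apply ContinuousOn.log
    · exact (Real.continuous_sqrt.add (Real.continuous_sqrt.comp (continuous_const.add continuous_id))).continuousOn
    · intro z hz
      have : (0:ℝ) < t + z := by linarith [hz.1]
      have := Real.sqrt_pos.2 this
      positivity
  have hint : IntervalIntegrable (fun z : ℝ => 1 / (2 * Real.sqrt z * Real.sqrt (t + z))) volume 0 1 := by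
    rw [intervalIntegrable_iff, Set.uIoc_of_le zero_le_one]
    exact (integrableOn_B t ht).congr_set_ae (Ioo_ae_eq_Ioc (μ := volume) (a := (0:ℝ)) (b := 1)).symm
  rw [intervalIntegral.integral_eq_sub_of_hasDeriv_right_of_le zero_le_one hcont
    (fun z hz => (hF z hz).hasDerivWithinAt) hint]
  rw [add_comm t 1]; simp [Real.sqrt_zero]


lemma d0_eq (z : ℝ) (hz : z ∈ Ioo (0:ℝ) 1) :
    1 / (2 * z * Real.sqrt (1 - z)) - 1 / (2 * z)
      = 1 / (2 * Real.sqrt (1 - z) * (1 + Real.sqrt (1 - z))) := by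
  have h1 : (0:ℝ) < 1 - z := by linarith [hz.2]
  set w := Real.sqrt (1 - z) with hwdef
  have hw : w ^ 2 = 1 - z := Real.sq_sqrt h1.le
  have hw0 : 0 < w := Real.sqrt_pos.2 h1
  have hz0 : z ≠ 0 := hz.1.ne'
  have h1w : (0:ℝ) < 1 + w := by linarith
  field_simp
  linear_combination (-1) * hw

lemma integrableOn_d0 :
    IntegrableOn (fun z : ℝ => 1 / (2 * z * Real.sqrt (1 - z)) - 1 / (2 * z)) (Ioo 0 1) := by
  refine Integrable.mono' integrableOn_inv_sqrt_one_sub ?_ ?_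
  · refine ContinuousOn.sub (ContinuousOn.div continuousOn_const ?_ ?_)
      (ContinuousOn.div continuousOn_const ((continuous_const.mul continuous_id).continuousOn) ?_) |>.aestronglyMeasurable measurableSet_Ioo
    · exact ((continuous_const.mul continuous_id).mul
        (Real.continuous_sqrt.comp (continuous_const.sub continuous_id))).continuousOn
    · intro z hz
      have h1 : (0:ℝ) < 1 - z := by linarith [hz.2]
      have := Real.sqrt_pos.2 h1
      have := hz.1
      positivity
    · intro z hz
      have := hz.1
      show 2 * z ≠ 0
      positivity
  · refine (ae_restrict_iff' measurableSet_Ioo).2 (ae_of_all _ fun z hz => ?_)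
    rw [d0_eq z hz]
    have h1 : (0:ℝ) < 1 - z := by linarith [hz.2]
    have hw0 : 0 < Real.sqrt (1 - z) := Real.sqrt_pos.2 h1
    rw [Real.norm_eq_abs, abs_of_nonneg (by positivity)]
    apply div_le_div_of_nonneg_left one_pos.le hw0
    nlinarith


lemma D0_val :
    ∫ z in Ioo (0:ℝ) 1, (1 / (2 * z * Real.sqrt (1 - z)) - 1 / (2 * z)) = Real.log 2 := by
  rw [← MeasureTheory.integral_Ioc_eq_integral_Ioo, ← intervalIntegral.integral_of_le zero_le_one]
  have hF : ∀ z ∈ Ioo (0:ℝ) 1, HasDerivAt (fun z => -Real.log (1 + Real.sqrt (1 - z)))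
      (1 / (2 * z * Real.sqrt (1 - z)) - 1 / (2 * z)) z := by
    intro z hz
    have h1 : (0:ℝ) < 1 - z := by linarith [hz.2]
    have hw0 : 0 < Real.sqrt (1 - z) := Real.sqrt_pos.2 h1
    have hinner : HasDerivAt (fun z : ℝ => 1 - z) (-1) z := by
      simpa using (hasDerivAt_id z).const_sub 1
    have hsq : HasDerivAt (fun z : ℝ => Real.sqrt (1 - z)) (1 / (2 * Real.sqrt (1 - z)) * (-1)) z :=
      (Real.hasDerivAt_sqrt h1.ne').comp z hinner
    have hadd := hsq.const_add 1
    have hpos : (0:ℝ) < 1 + Real.sqrt (1 - z) := by linarith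
    have hlog := (hadd.log hpos.ne').neg
    refine hlog.congr_deriv ?_; symm
    rw [d0_eq z hz]
    set w := Real.sqrt (1 - z)
    field_simp
  have hcont : ContinuousOn (fun z : ℝ => -Real.log (1 + Real.sqrt (1 - z))) (Icc 0 1) := by
    refine (ContinuousOn.log ?_ ?_).neg
    · exact (continuous_const.add (Real.continuous_sqrt.comp (continuous_const.sub continuous_id))).continuousOn
    · intro z hz
      have := Real.sqrt_nonneg (1 - z)
      positivity
  have hint : IntervalIntegrable (fun z : ℝ => 1 / (2 * z * Real.sqrt (1 - z)) - 1 / (2 * z)) volume 0 1 := by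
    rw [intervalIntegrable_iff, Set.uIoc_of_le zero_le_one]
    exact integrableOn_d0.congr_set_ae (Ioo_ae_eq_Ioc (μ := volume) (a := (0:ℝ)) (b := 1)).symm
  rw [intervalIntegral.integral_eq_sub_of_hasDeriv_right_of_le zero_le_one hcont
    (fun z hz => (hF z hz).hasDerivWithinAt) hint]
  simp [Real.sqrt_zero, Real.sqrt_one]
  norm_num


-- the dominating bound: for t ∈ (0,1), z ∈ (0,1)
lemma FtBound (t z : ℝ) (ht : 0 < t) (ht1 : t < 1) (hz : z ∈ Ioo (0:ℝ) 1) :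
    0 ≤ 1 / (2 * Real.sqrt z * Real.sqrt (1 - z) * Real.sqrt (t + (1 - t) * z))
        - 1 / (2 * Real.sqrt z * Real.sqrt (t + z)) ∧
    1 / (2 * Real.sqrt z * Real.sqrt (1 - z) * Real.sqrt (t + (1 - t) * z))
        - 1 / (2 * Real.sqrt z * Real.sqrt (t + z)) ≤ Real.sqrt 2 * (1 / Real.sqrt (1 - z)) := by
  obtain ⟨hz0, hz1⟩ := hz
  have h1z : (0:ℝ) < 1 - z := by linarith
  have hP : (0:ℝ) < t + (1 - t) * z := by nlinarith
  have hQ : (0:ℝ) < t + z := by linarith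
  set a := Real.sqrt z with hadef
  set b := Real.sqrt (1 - z) with hbdef
  set p := Real.sqrt (t + (1 - t) * z) with hpdef
  set q := Real.sqrt (t + z) with hqdef
  have ha0 : 0 < a := Real.sqrt_pos.2 hz0
  have hb0 : 0 < b := Real.sqrt_pos.2 h1z
  have hp0 : 0 < p := Real.sqrt_pos.2 hP
  have hq0 : 0 < q := Real.sqrt_pos.2 hQ
  have ha2 : a ^ 2 = z := Real.sq_sqrt hz0.le
  have hb2 : b ^ 2 = 1 - z := Real.sq_sqrt h1z.le
  have hp2 : p ^ 2 = t + (1 - t) * z := Real.sq_sqrt hP.le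
  have hq2 : q ^ 2 = t + z := Real.sq_sqrt hQ.le
  -- b * p ≤ q
  have hbp : b * p ≤ q := by
    rw [hbdef, hpdef, hqdef, ← Real.sqrt_mul h1z.le]
    apply Real.sqrt_le_sqrt
    nlinarith
  constructor
  · have : 1 / (2 * a * q) ≤ 1 / (2 * a * b * p) := by
      apply div_le_div_of_nonneg_left one_pos.le (by positivity)
      nlinarith
    linarith
  · -- key steps
    have step2 : q - b * p ≤ 2 * a ^ 2 * q := by
      have hbp2 : (b * p) ^ 2 = (1 - z) * (t + (1 - t) * z) := by rw [mul_pow, hb2, hp2]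
      have key : (q - b * p) * (q + b * p) ≤ 2 * a ^ 2 * q ^ 2 := by
        have hrw : (q - b * p) * (q + b * p) = q ^ 2 - (b * p) ^ 2 := by ring
        rw [hrw, hbp2, hq2, ha2]
        nlinarith [mul_nonneg ht.le (mul_nonneg hz0.le hz0.le)]
      have h3 : (q - b * p) * q ≤ (2 * a ^ 2 * q) * q := by
        nlinarith [key, mul_nonneg (sub_nonneg.2 hbp) (mul_nonneg hb0.le hp0.le)]
      exact le_of_mul_le_mul_right h3 hq0
    have step3 : a ≤ Real.sqrt 2 * p := by
      rw [hadef, hpdef, ← Real.sqrt_mul (by norm_num : (0:ℝ) ≤ 2)]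
      apply Real.sqrt_le_sqrt
      nlinarith
    have heq : 1 / (2 * a * b * p) - 1 / (2 * a * q) = (q - b * p) / (2 * a * b * p * q) := by
      field_simp
    rw [heq, mul_one_div, div_le_div_iff₀ (by positivity) hb0]
    calc (q - b * p) * b ≤ (2 * a ^ 2 * q) * b := by nlinarith
      _ ≤ Real.sqrt 2 * (2 * a * b * p * q) := by nlinarith [mul_le_mul_of_nonneg_right step3 (by positivity : (0:ℝ) ≤ 2 * a * q * b)]


lemma tendsto_D :
    Tendsto (fun t : ℝ => ∫ z in Ioo (0:ℝ) 1,
      (1 / (2 * Real.sqrt z * Real.sqrt (1 - z) * Real.sqrt (t + (1 - t) * z))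
        - 1 / (2 * Real.sqrt z * Real.sqrt (t + z))))
      (nhdsWithin 0 (Ioi 0)) (nhds (Real.log 2)) := by
  rw [← D0_val]
  have hmem : Ioo (0:ℝ) 1 ∈ nhdsWithin (0:ℝ) (Ioi 0) :=
    Ioo_mem_nhdsGT_of_mem (by constructor <;> norm_num)
  refine MeasureTheory.tendsto_integral_filter_of_dominated_convergence
    (bound := fun z => Real.sqrt 2 * (1 / Real.sqrt (1 - z))) ?_ ?_ ?_ ?_
  · -- a.e. strong measurability, eventually in t
    refine eventually_of_mem hmem fun t ht => ?_
    have hmeas : ContinuousOn (fun z : ℝ =>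
        1 / (2 * Real.sqrt z * Real.sqrt (1 - z) * Real.sqrt (t + (1 - t) * z))
          - 1 / (2 * Real.sqrt z * Real.sqrt (t + z))) (Ioo 0 1) := by
      apply ContinuousOn.sub
      · apply ContinuousOn.div continuousOn_const
        · exact (by continuity : Continuous fun z : ℝ =>
            2 * Real.sqrt z * Real.sqrt (1 - z) * Real.sqrt (t + (1 - t) * z)).continuousOn
        · intro z hz
          have h1 : (0:ℝ) < 1 - z := by linarith [hz.2]
          have h2 : (0:ℝ) < t + (1 - t) * z := by nlinarith [ht.1, ht.2, hz.1, hz.2]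
          have s1 := Real.sqrt_pos.2 hz.1
          have s2 := Real.sqrt_pos.2 h1
          have s3 := Real.sqrt_pos.2 h2
          positivity
      · apply ContinuousOn.div continuousOn_const
        · exact (by continuity : Continuous fun z : ℝ =>
            2 * Real.sqrt z * Real.sqrt (t + z)).continuousOn
        · intro z hz
          have h2 : (0:ℝ) < t + z := by nlinarith [ht.1, hz.1]
          have s1 := Real.sqrt_pos.2 hz.1
          have s3 := Real.sqrt_pos.2 h2
          positivity
    exact hmeas.aestronglyMeasurable measurableSet_Ioo
  · refine eventually_of_mem hmem fun t ht => ?_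
    refine (ae_restrict_iff' measurableSet_Ioo).2 (ae_of_all _ fun z hz => ?_)
    obtain ⟨h0, h1⟩ := FtBound t z ht.1 ht.2 hz
    rw [Real.norm_eq_abs, abs_of_nonneg h0]
    exact h1
  · exact Integrable.const_mul integrableOn_inv_sqrt_one_sub (Real.sqrt 2)
  · refine (ae_restrict_iff' measurableSet_Ioo).2 (ae_of_all _ fun z hz => ?_)
    have hz0 := hz.1
    have h1z : (0:ℝ) < 1 - z := by linarith [hz.2]
    have s1 := Real.sqrt_pos.2 hz0
    have s2 := Real.sqrt_pos.2 h1z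
    have hc : ContinuousAt (fun t : ℝ =>
        1 / (2 * Real.sqrt z * Real.sqrt (1 - z) * Real.sqrt (t + (1 - t) * z))
          - 1 / (2 * Real.sqrt z * Real.sqrt (t + z))) 0 := by
      apply ContinuousAt.sub
      · apply ContinuousAt.div continuousAt_const
        · fun_prop
        · simp only [zero_add, one_mul, sub_zero]
          have hss : Real.sqrt ((1 - (0:ℝ)) * z) = Real.sqrt z := by norm_num
          positivity
      · apply ContinuousAt.div continuousAt_const
        · fun_prop
        · simp only [zero_add]
          positivity
    have := hc.tendsto.mono_left (nhdsWithin_le_nhds (s := Ioi (0:ℝ)))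
    convert this using 2
    simp only [zero_add, sub_zero, one_mul]
    have e1 : 2 * Real.sqrt z * Real.sqrt (1 - z) * Real.sqrt z = 2 * z * Real.sqrt (1 - z) := by
      rw [show 2 * Real.sqrt z * Real.sqrt (1 - z) * Real.sqrt z
        = 2 * (Real.sqrt z * Real.sqrt z) * Real.sqrt (1 - z) by ring, Real.mul_self_sqrt hz0.le]
    have e2 : 2 * Real.sqrt z * Real.sqrt z = 2 * z := by
      rw [mul_assoc, Real.mul_self_sqrt hz0.le]
    rw [e1, e2]


lemma integrableOn_A (t : ℝ) (ht : 0 < t) (ht1 : t < 1) :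
    IntegrableOn (fun z : ℝ =>
      1 / (2 * Real.sqrt z * Real.sqrt (1 - z) * Real.sqrt (t + (1 - t) * z))) (Ioo 0 1) := by
  have hderiv : ∀ x ∈ Ioo (0:ℝ) 1, HasDerivWithinAt (fun x : ℝ => 1 - x^2) (-(2*x)) (Ioo 0 1) x := by
    intro x hx
    have : HasDerivAt (fun x : ℝ => 1 - x^2) (-(2*x)) x := by
      simpa using ((hasDerivAt_pow 2 x).const_sub 1)
    exact this.hasDerivWithinAt
  have hinj : InjOn (fun x : ℝ => 1 - x^2) (Ioo 0 1) := by
    intro a ha b hb h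
    simp only at h
    nlinarith [ha.1, hb.1]
  have key := MeasureTheory.integrableOn_image_iff_integrableOn_abs_deriv_smul
    measurableSet_Ioo hderiv hinj
    (fun z => 1 / (2 * Real.sqrt z * Real.sqrt (1 - z) * Real.sqrt (t + (1 - t) * z)))
  rw [image_one_sub_sq] at key
  rw [key]
  refine (integrableOn_Kint (1 - t) (by linarith)).congr_fun (fun x hx => ?_) measurableSet_Ioo
  have hx0 := hx.1; have hx1 := hx.2
  have h1 : 0 < 1 - x^2 := by nlinarith
  have h2 : 0 < 1 - (1-t)*x^2 := by nlinarith
  have hsx : Real.sqrt (x^2) = x := Real.sqrt_sq hx0.le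
  simp only [smul_eq_mul]
  rw [abs_neg, abs_of_nonneg (by positivity : (0:ℝ) ≤ 2*x)]
  rw [show 1 - (1 - x^2) = x^2 by ring, show t + (1 - t) * (1 - x^2) = 1 - (1-t)*x^2 by ring, hsx]
  rw [Real.sqrt_mul h1.le]
  have s1 : 0 < Real.sqrt (1 - x^2) := Real.sqrt_pos.2 h1
  have s2 : 0 < Real.sqrt (1 - (1-t)*x^2) := Real.sqrt_pos.2 h2
  field_simp

/-- the elliptic nome `q(t) = exp(−π·K(1−t)/K(t))` satisfies
`lim_{t→0⁺} q(t)/t = 1/16`, where `K` is the complete elliptic integral of the first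
kind in the parameter convention. -/

theorem nome_asymptotics (K : ℝ → ℝ)
    (hK : ∀ t : ℝ, K t = ∫ x in Set.Ioo (0 : ℝ) 1,
      1 / Real.sqrt ((1 - x ^ 2) * (1 - t * x ^ 2))) :
    Tendsto (fun t : ℝ => Real.exp (-π * K (1 - t) / K t) / t)
      (nhdsWithin 0 (Set.Ioi 0)) (nhds (1 / 16)) := by
  have hmem : Ioo (0:ℝ) (1/2) ∈ nhdsWithin (0:ℝ) (Ioi 0) :=
    Ioo_mem_nhdsGT_of_mem (by constructor <;> norm_num)
  have hKb : ∀ t : ℝ, 0 ≤ t → t < 1 →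
      π / 2 ≤ K t ∧ K t ≤ (1 / Real.sqrt (1 - t)) * (π / 2) := by
    intro t h0 h1
    rw [hK t]
    exact K_bounds t h0 h1
  have hKpos : ∀ t : ℝ, 0 ≤ t → t < 1 → 0 < K t := by
    intro t h0 h1
    have := (hKb t h0 h1).1
    linarith [Real.pi_pos]
  -- h2 : π / K t → 2
  have h2 : Tendsto (fun t : ℝ => π / K t) (nhdsWithin 0 (Ioi 0)) (nhds 2) := by
    have hlow : ∀ᶠ t in nhdsWithin (0:ℝ) (Ioi 0), 2 * Real.sqrt (1 - t) ≤ π / K t := by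
      refine eventually_of_mem hmem fun t ht => ?_
      have h0 : (0:ℝ) ≤ t := ht.1.le
      have h1 : t < 1 := by linarith [ht.2]
      obtain ⟨hb1, hb2⟩ := hKb t h0 h1
      have hKt := hKpos t h0 h1
      have hs : 0 < Real.sqrt (1 - t) := Real.sqrt_pos.2 (by linarith)
      rw [le_div_iff₀ hKt]
      calc 2 * Real.sqrt (1 - t) * K t
          ≤ 2 * Real.sqrt (1 - t) * ((1 / Real.sqrt (1 - t)) * (π / 2)) := by
            apply mul_le_mul_of_nonneg_left hb2 (by positivity)
        _ = π := by field_simp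
    have hup : ∀ᶠ t in nhdsWithin (0:ℝ) (Ioi 0), π / K t ≤ 2 := by
      refine eventually_of_mem hmem fun t ht => ?_
      have h0 : (0:ℝ) ≤ t := ht.1.le
      have h1 : t < 1 := by linarith [ht.2]
      have hKt := hKpos t h0 h1
      rw [div_le_iff₀ hKt]
      linarith [(hKb t h0 h1).1]
    have hl : Tendsto (fun t : ℝ => 2 * Real.sqrt (1 - t)) (nhdsWithin 0 (Ioi 0)) (nhds 2) := by
      have hc : ContinuousAt (fun t : ℝ => 2 * Real.sqrt (1 - t)) 0 := by fun_prop
      have := hc.tendsto.mono_left (nhdsWithin_le_nhds (s := Ioi (0:ℝ)))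
      simpa using this
    exact tendsto_of_tendsto_of_tendsto_of_le_of_le' hl tendsto_const_nhds hlow hup
  -- h3 : (π / K t - 2) * log t → 0
  have h3 : Tendsto (fun t : ℝ => (π / K t - 2) * Real.log t) (nhdsWithin 0 (Ioi 0)) (nhds 0) := by
    have hg : Tendsto (fun t : ℝ => 2 * (-(Real.log t * t))) (nhdsWithin 0 (Ioi 0)) (nhds 0) := by
      have := (tendsto_log_mul_rpow_nhdsGT_zero one_pos).neg.const_mul (2:ℝ)
      simp only [Real.rpow_one, neg_zero, mul_zero] at this
      exact this
    refine squeeze_zero_norm' ?_ hg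
    refine eventually_of_mem hmem fun t ht => ?_
    have h0 : (0:ℝ) < t := ht.1
    have h1 : t < 1 := by linarith [ht.2]
    obtain ⟨hb1, hb2⟩ := hKb t h0.le h1
    have hKt := hKpos t h0.le h1
    have hs : 0 < Real.sqrt (1 - t) := Real.sqrt_pos.2 (by linarith)
    have hs2 : Real.sqrt (1 - t) ^ 2 = 1 - t := Real.sq_sqrt (by linarith)
    have hs1 : Real.sqrt (1 - t) ≤ 1 := by nlinarith
    -- |π/Kt - 2| ≤ 2t
    have key1 : π / K t ≤ 2 := by rw [div_le_iff₀ hKt]; linarith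
    have key2 : 2 - 2 * t ≤ π / K t := by
      rw [le_div_iff₀ hKt]
      have step : 2 * Real.sqrt (1 - t) * K t ≤ π := by
        calc 2 * Real.sqrt (1 - t) * K t
            ≤ 2 * Real.sqrt (1 - t) * ((1 / Real.sqrt (1 - t)) * (π / 2)) := by
              apply mul_le_mul_of_nonneg_left hb2 (by positivity)
          _ = π := by field_simp
      have h2s : 2 - 2 * t ≤ 2 * Real.sqrt (1 - t) := by nlinarith
      nlinarith
    have hlt : Real.log t < 0 := Real.log_neg h0 h1
    rw [Real.norm_eq_abs, abs_mul, abs_of_nonpos (by linarith : π / K t - 2 ≤ 0),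
      abs_of_nonpos hlt.le]
    calc -(π / K t - 2) * -Real.log t ≤ 2 * t * -Real.log t := by
          apply mul_le_mul_of_nonneg_right (by linarith) (by linarith)
      _ = 2 * (-(Real.log t * t)) := by ring
  -- h4 : K (1 - t) + (1/2) * log t → log 4
  have h4 : Tendsto (fun t : ℝ => K (1 - t) + (1/2) * Real.log t)
      (nhdsWithin 0 (Ioi 0)) (nhds (Real.log 4)) := by
    have heq : ∀ᶠ t in nhdsWithin (0:ℝ) (Ioi 0),
        (fun t : ℝ => (∫ z in Ioo (0:ℝ) 1,
          (1 / (2 * Real.sqrt z * Real.sqrt (1 - z) * Real.sqrt (t + (1 - t) * z))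
            - 1 / (2 * Real.sqrt z * Real.sqrt (t + z))))
          + Real.log (1 + Real.sqrt (1 + t))) t
        = (fun t : ℝ => K (1 - t) + (1/2) * Real.log t) t := by
      refine eventually_of_mem hmem fun t ht => ?_
      have h0 : (0:ℝ) < t := ht.1
      have h1 : t < 1 := by linarith [ht.2]
      have hdecomp : K (1 - t)
          = (∫ z in Ioo (0:ℝ) 1,
            (1 / (2 * Real.sqrt z * Real.sqrt (1 - z) * Real.sqrt (t + (1 - t) * z))
              - 1 / (2 * Real.sqrt z * Real.sqrt (t + z))))
            + (Real.log (1 + Real.sqrt (1 + t)) - Real.log (Real.sqrt t)) := by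
        rw [hK (1 - t), subst_lemma t h0 h1,
          MeasureTheory.integral_sub (integrableOn_A t h0 h1) (integrableOn_B t h0),
          E_val t h0]
        ring
      simp only
      rw [hdecomp, Real.log_sqrt h0.le]
      ring
    refine Tendsto.congr' heq ?_
    have hlog2 : Tendsto (fun t : ℝ => Real.log (1 + Real.sqrt (1 + t)))
        (nhdsWithin 0 (Ioi 0)) (nhds (Real.log 2)) := by
      have hc : ContinuousAt (fun t : ℝ => Real.log (1 + Real.sqrt (1 + t))) 0 := by
        apply ContinuousAt.log (by fun_prop)
        simp [Real.sqrt_one]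
      have h' := hc.tendsto.mono_left (nhdsWithin_le_nhds (s := Ioi (0:ℝ)))
      convert h' using 2
      norm_num [Real.sqrt_one]
    have := tendsto_D.add hlog2
    rw [show Real.log 4 = Real.log 2 + Real.log 2 by
      rw [← Real.log_mul two_ne_zero two_ne_zero]; norm_num] 
    exact this
  -- assemble inner limit
  have hinner : Tendsto (fun t : ℝ =>
      (-(π / K t)) * (K (1 - t) + (1/2) * Real.log t)
        + ((π / K t - 2) * Real.log t) * (1/2))
      (nhdsWithin 0 (Ioi 0)) (nhds ((-2) * Real.log 4)) := by
    have hfirst := (h2.neg).mul h4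
    have hsecond := h3.mul_const (1/2 : ℝ)
    have := hfirst.add hsecond
    simpa using this
  have hexp := (Real.continuous_exp.tendsto _).comp hinner
  have h16 : Real.exp ((-2) * Real.log 4) = 1 / 16 := by
    rw [show (-2:ℝ) * Real.log 4 = Real.log ((4:ℝ) ^ (-2 : ℤ)) by
      rw [Real.log_zpow]; norm_num,
      Real.exp_log (by norm_num)]
    norm_num
  rw [h16] at hexp
  refine Tendsto.congr' ?_ hexp
  refine eventually_of_mem self_mem_nhdsWithin fun t (ht : (0:ℝ) < t) => ?_
  simp only [Function.comp_apply]
  rw [show (-(π / K t)) * (K (1 - t) + (1/2) * Real.log t)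
      + ((π / K t - 2) * Real.log t) * (1/2)
      = -π * K (1 - t) / K t - Real.log t by ring,
    Real.exp_sub, Real.exp_log ht]
end

section
/- Define t : ℝ → ℝ by t(s) = −(1+s²)²·(1−6s²+s⁴)³ / (32·s²·(1+s⁴)³). Then: (i) t maps the open interval (1, 1+√2) bijectively onto (0,1); (ii) lim_{s→(1+√2)⁻} t(s)/( (√2+1−s)³ ) = (32/27)·(10−7√2); (iii) lim_{s→1⁺} (1−t(s))/(s−1)² = 8. -/
open Real Filter

/-- properties of the rational parameterization
`t(s) = −(1+s²)²(1−6s²+s⁴)³/(32 s²(1+s⁴)³)` of the algebraic Painlevé VI solution: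
(i) it maps `(1, 1+√2)` bijectively onto `(0,1)`;
(ii) `t(s) ∼ (32/27)(10−7√2)(√2+1−s)³` as `s → (1+√2)⁻`;
(iii) `1−t(s) ∼ 8(s−1)²` as `s → 1⁺`. -/
theorem algebraic_solution_parameterization (t : ℝ → ℝ)
    (ht : ∀ s : ℝ, t s =
      -((1 + s ^ 2) ^ 2 * (1 - 6 * s ^ 2 + s ^ 4) ^ 3) / (32 * s ^ 2 * (1 + s ^ 4) ^ 3)) :
    Set.BijOn t (Set.Ioo 1 (1 + Real.sqrt 2)) (Set.Ioo 0 1) ∧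
    Tendsto (fun s : ℝ => t s / (Real.sqrt 2 + 1 - s) ^ 3)
      (nhdsWithin (1 + Real.sqrt 2) (Set.Iio (1 + Real.sqrt 2)))
      (nhds ((32 / 27) * (10 - 7 * Real.sqrt 2))) ∧
    Tendsto (fun s : ℝ => (1 - t s) / (s - 1) ^ 2)
      (nhdsWithin 1 (Set.Ioi 1)) (nhds 8) := by
  set r := Real.sqrt 2 with hrdef
  have hr : r ^ 2 = 2 := Real.sq_sqrt (by norm_num)
  have hr0 : (0:ℝ) < r := Real.sqrt_pos.mpr (by norm_num)
  have hr1 : (1:ℝ) < r := by nlinarith [hr, hr0]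
  have h1a : (1:ℝ) < 1 + r := by linarith
  -- continuity on the closed interval
  have hcont : ContinuousOn t (Set.Icc 1 (1 + r)) := by
    have hc : ContinuousOn
        (fun s : ℝ => -((1 + s ^ 2) ^ 2 * (1 - 6 * s ^ 2 + s ^ 4) ^ 3) /
          (32 * s ^ 2 * (1 + s ^ 4) ^ 3)) (Set.Icc 1 (1 + r)) := by
      apply ContinuousOn.div (by fun_prop) (by fun_prop)
      intro x hx
      have hx0 : (0:ℝ) < x := lt_of_lt_of_le one_pos hx.1
      positivity
    exact hc.congr fun s _ => ht s
  -- derivative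
  have hderiv : ∀ x ∈ Set.Ioo (1:ℝ) (1 + r), HasDerivAt t
      (-((x ^ 4 - 1) * (x ^ 4 - 6 * x ^ 2 + 1) ^ 2 * (x ^ 4 + 6 * x ^ 2 + 1) ^ 2 /
        (16 * x ^ 3 * (1 + x ^ 4) ^ 4))) x := by
    intro x hx
    have hx0 : (0:ℝ) < x := lt_trans one_pos hx.1
    have hxne : x ≠ 0 := ne_of_gt hx0
    have hnum := ((((hasDerivAt_pow 2 x).const_add 1).pow 2).mul
      (((((hasDerivAt_pow 2 x).const_mul (6:ℝ)).const_sub 1).add (hasDerivAt_pow 4 x)).pow 3)).neg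
    have hden := ((hasDerivAt_pow 2 x).const_mul (32:ℝ)).mul
      (((hasDerivAt_pow 4 x).const_add 1).pow 3)
    have hdne : 32 * x ^ 2 * (1 + x ^ 4) ^ 3 ≠ 0 := by positivity
    have hdiv := hnum.div hden hdne
    have hF : HasDerivAt
        (fun s : ℝ => -((1 + s ^ 2) ^ 2 * (1 - 6 * s ^ 2 + s ^ 4) ^ 3) /
          (32 * s ^ 2 * (1 + s ^ 4) ^ 3))
        (-((x ^ 4 - 1) * (x ^ 4 - 6 * x ^ 2 + 1) ^ 2 * (x ^ 4 + 6 * x ^ 2 + 1) ^ 2 /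
          (16 * x ^ 3 * (1 + x ^ 4) ^ 4))) x := by
      convert hdiv using 1
      · rfl
      · rfl
      · rfl
      have h4 : (1:ℝ) + x ^ 4 ≠ 0 := by positivity
      simp only [Pi.add_apply, Pi.pow_apply, Pi.mul_apply, Pi.neg_apply]
      field_simp
      ring
    exact hF.congr_of_eventuallyEq (Filter.Eventually.of_forall ht)
  -- strict antitonicity
  have hanti : StrictAntiOn t (Set.Icc 1 (1 + r)) := by
    apply strictAntiOn_of_deriv_neg (convex_Icc _ _) hcont
    intro x hx
    rw [interior_Icc] at hx
    rw [(hderiv x hx).deriv]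
    have hx0 : (0:ℝ) < x := lt_trans one_pos hx.1
    have hx2 : (1:ℝ) < x ^ 2 := by nlinarith [hx.1]
    have ha : x ^ 2 < 3 + 2 * r := by nlinarith [hx.2, hr, hx0]
    have hb : 3 - 2 * r < x ^ 2 := by nlinarith [hx2, hr1]
    have hprod := mul_neg_of_neg_of_pos (sub_neg.mpr ha) (sub_pos.mpr hb)
    have h2 : x ^ 4 - 6 * x ^ 2 + 1 < 0 := by nlinarith [hprod, hr]
    have h2sq : (0:ℝ) < (x ^ 4 - 6 * x ^ 2 + 1) ^ 2 := by nlinarith [h2]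
    have h1' : (0:ℝ) < x ^ 4 - 1 := by nlinarith [hx2]
    have hA : (0:ℝ) < (x ^ 4 - 1) * (x ^ 4 - 6 * x ^ 2 + 1) ^ 2 * (x ^ 4 + 6 * x ^ 2 + 1) ^ 2 :=
      mul_pos (mul_pos h1' h2sq) (by positivity)
    have hB : (0:ℝ) < 16 * x ^ 3 * (1 + x ^ 4) ^ 4 := by positivity
    have := div_pos hA hB
    linarith
  -- values at the endpoints
  have ht1 : t 1 = 1 := by rw [ht]; norm_num
  have hta : t (1 + r) = 0 := by
    rw [ht]
    have h0 : 1 - 6 * (1 + r) ^ 2 + (1 + r) ^ 4 = 0 := by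
      linear_combination (r ^ 2 + 4 * r + 2) * hr
    rw [h0]
    norm_num
  -- part (i)
  have hmem1 : (1:ℝ) ∈ Set.Icc 1 (1 + r) := Set.left_mem_Icc.mpr (le_of_lt h1a)
  have hmema : (1:ℝ) + r ∈ Set.Icc 1 (1 + r) := Set.right_mem_Icc.mpr (le_of_lt h1a)
  have hmaps : Set.MapsTo t (Set.Ioo 1 (1 + r)) (Set.Ioo 0 1) := by
    intro s hs
    have hsmem : s ∈ Set.Icc 1 (1 + r) := ⟨le_of_lt hs.1, le_of_lt hs.2⟩
    constructor
    · have := hanti hsmem hmema hs.2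
      rw [hta] at this
      exact this
    · have := hanti hmem1 hsmem hs.1
      rw [ht1] at this
      exact this
  have hinj : Set.InjOn t (Set.Ioo 1 (1 + r)) := hanti.injOn.mono Set.Ioo_subset_Icc_self
  have hsurj : Set.SurjOn t (Set.Ioo 1 (1 + r)) (Set.Ioo 0 1) := by
    have h := intermediate_value_Ioo' (le_of_lt h1a) hcont
    rw [ht1, hta] at h
    exact h
  refine ⟨⟨hmaps, hinj, hsurj⟩, ?_, ?_⟩
  -- part (ii)
  · have hfact1 : ∀ s : ℝ, -(1 - 6 * s ^ 2 + s ^ 4) =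
        (r + 1 - s) * ((r + 1 + s) * (s ^ 2 - 3 + 2 * r)) := by
      intro s
      linear_combination (-(s ^ 2 - 3 + 2 * r) - 4) * hr
    have hfact3 : ∀ s : ℝ, -((1 + s ^ 2) ^ 2 * (1 - 6 * s ^ 2 + s ^ 4) ^ 3) =
        (1 + s ^ 2) ^ 2 * ((r + 1 - s) * ((r + 1 + s) * (s ^ 2 - 3 + 2 * r))) ^ 3 := by
      intro s
      calc -((1 + s ^ 2) ^ 2 * (1 - 6 * s ^ 2 + s ^ 4) ^ 3)
          = (1 + s ^ 2) ^ 2 * (-(1 - 6 * s ^ 2 + s ^ 4)) ^ 3 := by ring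
        _ = _ := by rw [hfact1 s]
    have hg : ContinuousAt
        (fun s : ℝ => (1 + s ^ 2) ^ 2 * ((r + 1 + s) * (s ^ 2 - 3 + 2 * r)) ^ 3 /
          (32 * s ^ 2 * (1 + s ^ 4) ^ 3)) (1 + r) := by
      apply ContinuousAt.div (by fun_prop) (by fun_prop)
      positivity
    have hval : (1 + (1 + r) ^ 2) ^ 2 * ((r + 1 + (1 + r)) * ((1 + r) ^ 2 - 3 + 2 * r)) ^ 3 /
        (32 * (1 + r) ^ 2 * (1 + (1 + r) ^ 4) ^ 3) = 32 / 27 * (10 - 7 * r) := by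
      rw [div_eq_iff (by positivity : (32 * (1 + r) ^ 2 * (1 + (1 + r) ^ 4) ^ 3 : ℝ) ≠ 0)]
      linear_combination (44416/27 + 295552/27*r + 1156096/27*r^2 + 353536/3*r^3
        + 6444352/27*r^4 + 9919936/27*r^5 + 3953888/9*r^6 + 11125856/27*r^7
        + 904888/3*r^8 + 505384/3*r^9 + 1861640/27*r^10 + 523480/27*r^11
        + 90112/27*r^12 + 7168/27*r^13) * hr
    have hG : Tendsto
        (fun s : ℝ => (1 + s ^ 2) ^ 2 * ((r + 1 + s) * (s ^ 2 - 3 + 2 * r)) ^ 3 /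
          (32 * s ^ 2 * (1 + s ^ 4) ^ 3)) (nhds (1 + r)) (nhds (32 / 27 * (10 - 7 * r))) := by
      have h := hg.tendsto
      rwa [hval] at h
    refine Tendsto.congr' ?_ (hG.mono_left nhdsWithin_le_nhds)
    filter_upwards [self_mem_nhdsWithin,
      ((eventually_gt_nhds (show (0:ℝ) < 1 + r by linarith)).filter_mono nhdsWithin_le_nhds)]
      with s hs hs0
    have hslt : s < 1 + r := hs
    have hsne : s ≠ 0 := ne_of_gt hs0
    have hrs : r + 1 - s ≠ 0 := ne_of_gt (by linarith)
    have h4 : (1:ℝ) + s ^ 4 ≠ 0 := by positivity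
    rw [ht s, hfact3 s]
    field_simp
  -- part (iii)
  · have hg2 : ContinuousAt
        (fun s : ℝ => (1 + s) ^ 2 * (1 + 6 * s ^ 2 + s ^ 4) ^ 3 /
          (32 * s ^ 2 * (1 + s ^ 4) ^ 3)) 1 := by
      apply ContinuousAt.div (by fun_prop) (by fun_prop)
      norm_num
    have hval2 : (1 + (1:ℝ)) ^ 2 * (1 + 6 * (1:ℝ) ^ 2 + (1:ℝ) ^ 4) ^ 3 /
        (32 * (1:ℝ) ^ 2 * (1 + (1:ℝ) ^ 4) ^ 3) = 8 := by norm_num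
    have hG2 : Tendsto
        (fun s : ℝ => (1 + s) ^ 2 * (1 + 6 * s ^ 2 + s ^ 4) ^ 3 /
          (32 * s ^ 2 * (1 + s ^ 4) ^ 3)) (nhds 1) (nhds 8) := by
      have h := hg2.tendsto
      rwa [hval2] at h
    refine Tendsto.congr' ?_ (hG2.mono_left nhdsWithin_le_nhds)
    filter_upwards [self_mem_nhdsWithin] with s hs
    have hs1 : (1:ℝ) < s := hs
    have hs0 : (0:ℝ) < s := lt_trans one_pos hs1
    have hsne : s ≠ 0 := ne_of_gt hs0
    have hs1' : s - 1 ≠ 0 := sub_ne_zero.mpr (ne_of_gt hs1)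
    have h4 : (1:ℝ) + s ^ 4 ≠ 0 := by positivity
    rw [ht s]
    field_simp
    ring
end
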